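/- Let N be a Kähler manifold with ∇R = 0 satisfying ⟨R(Y,X)X, R(X,JX)JX⟩ ≡ 0 for all tangent vectors X, Y. Then along any smooth solution of the Schrödinger-Airy flow from S¹, the functional E₃(u) = ∫|∇_x u_x|² dx − (1/4)∫⟨u_x, R(u_x, Ju_x)Ju_x⟩ dx is conserved. -/

import Mathlib

open scoped RealInnerProductSpace
open Real

/-- An abstract model of the data attached to a smooth map `u : S¹ × ℝ → N` into a
Riemannian manifold: sections of the pullback bundle `u⁻¹TN` (with fibers identified with
a fixed inner product space `V`), covariant derivatives `Dx`, `Dt`, the curvature `R` of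
`N` along `u`, together with their standard properties (periodicity in `x`,
torsion-freeness, the commutation formula `∇ₜ∇ₓ − ∇ₓ∇ₜ = R(uₜ,uₓ)`, metric compatibility,
differentiation under the integral sign, and the curvature symmetries). -/
structure CovSystem (V : Type*) [NormedAddCommGroup V] [InnerProductSpace ℝ V] where
  Sec : Set (ℝ → ℝ → V)
  ux : ℝ → ℝ → V
  ut : ℝ → ℝ → V
  Dx : (ℝ → ℝ → V) → ℝ → ℝ → V
  Dt : (ℝ → ℝ → V) → ℝ → ℝ → V
  R : ℝ → ℝ → V → V → V → V
  mem_ux : ux ∈ Sec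
  mem_ut : ut ∈ Sec
  mem_Dx : ∀ s ∈ Sec, Dx s ∈ Sec
  mem_Dt : ∀ s ∈ Sec, Dt s ∈ Sec
  mem_R : ∀ a ∈ Sec, ∀ b ∈ Sec, ∀ c ∈ Sec,
    (fun t x => R t x (a t x) (b t x) (c t x)) ∈ Sec
  cont : ∀ s ∈ Sec, Continuous fun p : ℝ × ℝ => s p.1 p.2
  periodic : ∀ s ∈ Sec, ∀ t x, s t (x + 2 * π) = s t x
  torsion : Dt ux = Dx ut
  comm : ∀ s ∈ Sec, ∀ t x,
    Dt (Dx s) t x - Dx (Dt s) t x = R t x (ut t x) (ux t x) (s t x)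
  metric_x : ∀ s ∈ Sec, ∀ r ∈ Sec, ∀ t x,
    HasDerivAt (fun y => ⟪s t y, r t y⟫) (⟪Dx s t x, r t x⟫ + ⟪s t x, Dx r t x⟫) x
  metric_t : ∀ s ∈ Sec, ∀ r ∈ Sec, ∀ t x,
    HasDerivAt (fun τ => ⟪s τ x, r τ x⟫) (⟪Dt s t x, r t x⟫ + ⟪s t x, Dt r t x⟫) t
  dint : ∀ s ∈ Sec, ∀ r ∈ Sec, ∀ t,
    HasDerivAt (fun τ => ∫ x in (0 : ℝ)..(2 * π), ⟪s τ x, r τ x⟫)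
      (∫ x in (0 : ℝ)..(2 * π), (⟪Dt s t x, r t x⟫ + ⟪s t x, Dt r t x⟫)) t
  R_antisym : ∀ t x a b c, R t x a b c = -R t x b a c
  R_skew : ∀ t x a b c d, ⟪R t x a b c, d⟫ = -⟪R t x a b d, c⟫
  R_pair : ∀ t x a b c d, ⟪R t x a b c, d⟫ = ⟪R t x c d a, b⟫

/-- A `CovSystem` for a map into a Kähler manifold: in addition there is the complex
structure `J` along `u`, which is an almost-complex structure (`J² = −1`), skew-adjoint
with respect to the metric, and parallel (`∇J = 0`, so it commutes with `Dx` and `Dt`). -/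
structure KCovSystem (V : Type*) [NormedAddCommGroup V] [InnerProductSpace ℝ V]
    extends CovSystem V where
  J : ℝ → ℝ → V → V
  mem_J : ∀ s ∈ Sec, (fun t x => J t x (s t x)) ∈ Sec
  J_skew : ∀ t x v w, ⟪J t x v, w⟫ = -⟪v, J t x w⟫
  J_sq : ∀ t x v, J t x (J t x v) = -v
  J_par_x : ∀ s ∈ Sec, ∀ t x, Dx (fun t x => J t x (s t x)) t x = J t x (Dx s t x)
  J_par_t : ∀ s ∈ Sec, ∀ t x, Dt (fun t x => J t x (s t x)) t x = J t x (Dt s t x)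

/-- If the Kähler manifold `N` is locally symmetric (`∇R = 0`) and satisfies the curvature
identity `⟨R(Y,X)X, R(X,JX)JX⟩ ≡ 0`, then along any smooth solution of the Schrödinger–Airy
flow from `S¹`, the functional
`E₃(u) = ∫ |∇ₓuₓ|² dx − (1/4) ∫ ⟨uₓ, R(uₓ, Juₓ)Juₓ⟩ dx` is conserved. -/
theorem stmt14 {V : Type*} [NormedAddCommGroup V] [InnerProductSpace ℝ V]
    (F : KCovSystem V) (α β : ℝ)
    (hRx : ∀ a ∈ F.Sec, ∀ b ∈ F.Sec, ∀ c ∈ F.Sec, ∀ t x,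
      F.Dx (fun t x => F.R t x (a t x) (b t x) (c t x)) t x
        = F.R t x (F.Dx a t x) (b t x) (c t x) + F.R t x (a t x) (F.Dx b t x) (c t x)
          + F.R t x (a t x) (b t x) (F.Dx c t x))
    (hRt : ∀ a ∈ F.Sec, ∀ b ∈ F.Sec, ∀ c ∈ F.Sec, ∀ t x,
      F.Dt (fun t x => F.R t x (a t x) (b t x) (c t x)) t x
        = F.R t x (F.Dt a t x) (b t x) (c t x) + F.R t x (a t x) (F.Dt b t x) (c t x)
          + F.R t x (a t x) (b t x) (F.Dt c t x))
    (hRJ : ∀ t x a b c d, ⟪F.R t x a b c, F.J t x d⟫ = -⟪F.R t x a b (F.J t x c), d⟫)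
    (hcurv : ∀ t x (X Y : V),
      ⟪F.R t x Y X X, F.R t x X (F.J t x X) (F.J t x X)⟫ = 0)
    (hflow : ∀ t x, F.ut t x
      = α • F.J t x (F.Dx F.ux t x)
        + β • (F.Dx (F.Dx F.ux) t x
          + (1 / 2 : ℝ) • F.R t x (F.ux t x) (F.J t x (F.ux t x)) (F.J t x (F.ux t x)))) :
    ∀ t₁ t₂ : ℝ,
      ((∫ x in (0 : ℝ)..(2 * π), ⟪F.Dx F.ux t₁ x, F.Dx F.ux t₁ x⟫)
          - (1 / 4 : ℝ) * ∫ x in (0 : ℝ)..(2 * π),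
              ⟪F.ux t₁ x, F.R t₁ x (F.ux t₁ x) (F.J t₁ x (F.ux t₁ x)) (F.J t₁ x (F.ux t₁ x))⟫)
        = ((∫ x in (0 : ℝ)..(2 * π), ⟪F.Dx F.ux t₂ x, F.Dx F.ux t₂ x⟫)
          - (1 / 4 : ℝ) * ∫ x in (0 : ℝ)..(2 * π),
              ⟪F.ux t₂ x, F.R t₂ x (F.ux t₂ x) (F.J t₂ x (F.ux t₂ x)) (F.J t₂ x (F.ux t₂ x))⟫) := by
  intro t₁ t₂
  -- memberships
  have hmX := F.mem_ux
  have hmW := F.mem_Dx _ hmX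
  have hmDW := F.mem_Dx _ hmW
  have hmUT := F.mem_ut
  have hmDUT := F.mem_Dx _ hmUT
  have hmJX : (fun t x => F.J t x (F.ux t x)) ∈ F.Sec := F.mem_J _ hmX
  have hmJW : (fun t x => F.J t x (F.Dx F.ux t x)) ∈ F.Sec := F.mem_J _ hmW
  have hmS : (fun t x => F.R t x (F.ux t x) (F.J t x (F.ux t x)) (F.J t x (F.ux t x))) ∈ F.Sec :=
    F.mem_R _ hmX _ hmJX _ hmJX
  have hmRXWX : (fun t x => F.R t x (F.ux t x) (F.Dx F.ux t x) (F.ux t x)) ∈ F.Sec :=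
    F.mem_R _ hmX _ hmW _ hmX
  have hmDtW := F.mem_Dt _ hmW
  have hmDtS := F.mem_Dt _ hmS
  have hmDtX := F.mem_Dt _ hmX
  -- continuity in x, periodicity
  have hcx : ∀ s ∈ F.Sec, ∀ t : ℝ, Continuous fun x : ℝ => s t x := by
    intro s hs t
    exact (F.cont s hs).comp (continuous_const.prodMk continuous_id)
  have hper : ∀ s ∈ F.Sec, ∀ t : ℝ, s t (2 * π) = s t 0 := by
    intro s hs t
    have h := F.periodic s hs t 0
    rwa [zero_add] at h
  -- pointwise scalar algebra
  have hsk0 : ∀ t x (a b c : V), ⟪F.R t x a b c, c⟫ = 0 := by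
    intro t x a b c
    have h := F.R_skew t x a b c c
    linarith
  have hJ0 : ∀ t x (v : V), ⟪F.J t x v, v⟫ = 0 := by
    intro t x v
    have h := F.J_skew t x v v
    have h2 := real_inner_comm v (F.J t x v)
    linarith
  have haa : ∀ t x (a c : V), F.R t x a a c = 0 := by
    intro t x a c
    have h := F.R_antisym t x a a c
    have h2 : (2:ℝ) • F.R t x a a c = 0 := by
      rw [two_smul]
      nth_rewrite 2 [h]
      exact add_neg_cancel _
    exact (smul_eq_zero.mp h2).resolve_left (by norm_num)
  have hK : ∀ t x (a b c d : V),
      ⟪F.R t x (F.J t x a) (F.J t x b) c, d⟫ = ⟪F.R t x a b c, d⟫ := by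
    intro t x a b c d
    rw [F.R_pair t x (F.J t x a) (F.J t x b) c d]
    rw [hRJ t x c d (F.J t x a) b]
    rw [F.R_skew t x c d (F.J t x (F.J t x a)) b, neg_neg]
    rw [F.J_sq t x a, inner_neg_right]
    rw [← F.R_skew t x c d a b]
    exact (F.R_pair t x a b c d).symm
  have hAlg1 : ∀ t x (v y w : V), ⟪F.R t x v y y, w⟫ = -⟪F.R t x y w y, v⟫ := by
    intro t x v y w
    rw [F.R_pair t x v y y w]
    rw [F.R_skew t x y w v y]
  have hB0 : ∀ t x (y d w : V), ⟪w, F.R t x y d y⟫ = ⟪F.R t x y w y, d⟫ := by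
    intro t x y d w
    rw [real_inner_comm (F.R t x y d y) w]
    exact F.R_pair t x y d y w
  have hB1 : ∀ t x (v y : V),
      ⟪y, F.R t x v (F.J t x y) (F.J t x y)⟫ = ⟪F.R t x y (F.J t x y) (F.J t x y), v⟫ := by
    intro t x v y
    rw [real_inner_comm (F.R t x v (F.J t x y) (F.J t x y)) y]
    rw [F.R_pair t x v (F.J t x y) (F.J t x y) y]
    rw [F.R_antisym t x (F.J t x y) y v, inner_neg_left]
    rw [F.R_skew t x y (F.J t x y) v (F.J t x y), neg_neg]
  have hB2 : ∀ t x (v y : V),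
      ⟪y, F.R t x y (F.J t x v) (F.J t x y)⟫ = ⟪F.R t x y (F.J t x y) (F.J t x y), v⟫ := by
    intro t x v y
    rw [real_inner_comm (F.R t x y (F.J t x v) (F.J t x y)) y]
    rw [F.R_pair t x y (F.J t x v) (F.J t x y) y]
    rw [hRJ t x (F.J t x y) y y v]
    rw [F.R_antisym t x (F.J t x y) y (F.J t x y), inner_neg_left, neg_neg]
  have hB3 : ∀ t x (v y : V),
      ⟪y, F.R t x y (F.J t x y) (F.J t x v)⟫ = ⟪F.R t x y (F.J t x y) (F.J t x y), v⟫ := by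
    intro t x v y
    rw [real_inner_comm (F.R t x y (F.J t x y) (F.J t x v)) y]
    rw [F.R_skew t x y (F.J t x y) (F.J t x v) y]
    rw [hRJ t x y (F.J t x y) y v, neg_neg]
  have hA3 : ∀ t x (y w : V),
      ⟪F.J t x w, F.R t x y (F.J t x w) (F.J t x y)⟫ = ⟪F.R t x y w y, F.J t x w⟫ := by
    intro t x y w
    rw [real_inner_comm (F.R t x y (F.J t x w) (F.J t x y)) (F.J t x w)]
    rw [F.R_pair t x y (F.J t x w) (F.J t x y) (F.J t x w)]
    rw [hK t x y w y (F.J t x w)]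
  have hA4 : ∀ t x (y w : V),
      ⟪F.J t x w, F.R t x w (F.J t x y) (F.J t x y)⟫ = ⟪F.R t x y w y, F.J t x w⟫ := by
    intro t x y w
    rw [real_inner_comm (F.R t x w (F.J t x y) (F.J t x y)) (F.J t x w)]
    rw [F.R_pair t x w (F.J t x y) (F.J t x y) (F.J t x w)]
    rw [hK t x y w w (F.J t x y)]
    rw [hRJ t x y w w y]
    rw [F.R_skew t x y w (F.J t x w) y, neg_neg]
  have hC : ∀ t x, ⟪F.R t x (F.ux t x) (F.Dx F.ux t x) (F.ux t x),
      F.R t x (F.ux t x) (F.J t x (F.ux t x)) (F.J t x (F.ux t x))⟫ = 0 := by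
    intro t x
    rw [F.R_antisym t x (F.ux t x) (F.Dx F.ux t x) (F.ux t x), inner_neg_left,
      hcurv t x (F.ux t x) (F.Dx F.ux t x), neg_zero]
  -- structural derivative identities
  have hTor : ∀ t x, F.Dt F.ux t x = F.Dx F.ut t x := by
    intro t x; rw [F.torsion]
  have hDtDxu : ∀ t x, F.Dt (F.Dx F.ux) t x
      = F.Dx (F.Dx F.ut) t x + F.R t x (F.ut t x) (F.ux t x) (F.ux t x) := by
    intro t x
    have h := F.comm F.ux F.mem_ux t x
    rw [F.torsion] at h
    have h2 := eq_add_of_sub_eq h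
    rw [add_comm] at h2
    exact h2
  have hDtS : ∀ t x,
      F.Dt (fun t x => F.R t x (F.ux t x) (F.J t x (F.ux t x)) (F.J t x (F.ux t x))) t x
        = F.R t x (F.Dx F.ut t x) (F.J t x (F.ux t x)) (F.J t x (F.ux t x))
          + F.R t x (F.ux t x) (F.J t x (F.Dx F.ut t x)) (F.J t x (F.ux t x))
          + F.R t x (F.ux t x) (F.J t x (F.ux t x)) (F.J t x (F.Dx F.ut t x)) := by
    intro t x
    have h := hRt F.ux F.mem_ux _ hmJX _ hmJX t x
    rw [F.J_par_t F.ux F.mem_ux t x] at h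
    rw [F.torsion] at h
    exact h
  have hDxS : ∀ t x,
      F.Dx (fun t x => F.R t x (F.ux t x) (F.J t x (F.ux t x)) (F.J t x (F.ux t x))) t x
        = F.R t x (F.Dx F.ux t x) (F.J t x (F.ux t x)) (F.J t x (F.ux t x))
          + F.R t x (F.ux t x) (F.J t x (F.Dx F.ux t x)) (F.J t x (F.ux t x))
          + F.R t x (F.ux t x) (F.J t x (F.ux t x)) (F.J t x (F.Dx F.ux t x)) := by
    intro t x
    have h := hRx F.ux F.mem_ux _ hmJX _ hmJX t x
    rw [F.J_par_x F.ux F.mem_ux t x] at h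
    exact h
  have hDxRXWX : ∀ t x,
      F.Dx (fun t x => F.R t x (F.ux t x) (F.Dx F.ux t x) (F.ux t x)) t x
        = F.R t x (F.Dx F.ux t x) (F.Dx F.ux t x) (F.ux t x)
          + F.R t x (F.ux t x) (F.Dx (F.Dx F.ux) t x) (F.ux t x)
          + F.R t x (F.ux t x) (F.Dx F.ux t x) (F.Dx F.ux t x) :=
    fun t x => hRx F.ux F.mem_ux _ hmW _ F.mem_ux t x
  have hE : ∀ t : ℝ, HasDerivAt
      (fun τ : ℝ => (∫ x in (0:ℝ)..(2*π), ⟪F.Dx F.ux τ x, F.Dx F.ux τ x⟫)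
        - (1/4 : ℝ) * ∫ x in (0:ℝ)..(2*π),
            ⟪F.ux τ x, F.R τ x (F.ux τ x) (F.J τ x (F.ux τ x)) (F.J τ x (F.ux τ x))⟫) 0 t := by
    intro t
    set Gb : ℝ → ℝ := (fun y : ℝ =>
      (((2*⟪F.Dx F.ut t y, F.Dx F.ux t y⟫ - 2*⟪F.ut t y, F.Dx (F.Dx F.ux) t y⟫)
        - ⟪F.ut t y, F.R t y (F.ux t y) (F.J t y (F.ux t y)) (F.J t y (F.ux t y))⟫)
        + (2*α)*⟪F.J t y (F.Dx F.ux t y), F.Dx (F.Dx F.ux) t y⟫)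
        + β*((((⟪F.Dx (F.Dx F.ux) t y, F.Dx (F.Dx F.ux) t y⟫
          - ⟪F.Dx F.ux t y, F.R t y (F.ux t y) (F.Dx F.ux t y) (F.ux t y)⟫)
          + ⟪F.R t y (F.ux t y) (F.J t y (F.ux t y)) (F.J t y (F.ux t y)), F.Dx (F.Dx F.ux) t y⟫)
          + (1/4)*⟪F.R t y (F.ux t y) (F.J t y (F.ux t y)) (F.J t y (F.ux t y)),
              F.R t y (F.ux t y) (F.J t y (F.ux t y)) (F.J t y (F.ux t y))⟫))) with hGb
    have hG : ∀ x : ℝ, HasDerivAt Gb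
        ((⟪F.Dt (F.Dx F.ux) t x, F.Dx F.ux t x⟫ + ⟪F.Dx F.ux t x, F.Dt (F.Dx F.ux) t x⟫)
          - (1/4:ℝ)*(⟪F.Dt F.ux t x, F.R t x (F.ux t x) (F.J t x (F.ux t x)) (F.J t x (F.ux t x))⟫
            + ⟪F.ux t x, F.Dt (fun t x => F.R t x (F.ux t x) (F.J t x (F.ux t x)) (F.J t x (F.ux t x))) t x⟫)) x := by
      intro x
      have m1 : HasDerivAt (fun y => ⟪F.Dx F.ut t y, F.Dx F.ux t y⟫)
          (⟪F.Dx (F.Dx F.ut) t x, F.Dx F.ux t x⟫ + ⟪F.Dx F.ut t x, F.Dx (F.Dx F.ux) t x⟫) x :=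
        F.metric_x _ hmDUT _ hmW t x
      have m2 : HasDerivAt (fun y => ⟪F.ut t y, F.Dx (F.Dx F.ux) t y⟫)
          (⟪F.Dx F.ut t x, F.Dx (F.Dx F.ux) t x⟫ + ⟪F.ut t x, F.Dx (F.Dx (F.Dx F.ux)) t x⟫) x :=
        F.metric_x _ hmUT _ hmDW t x
      have m3 : HasDerivAt (fun y => ⟪F.ut t y, F.R t y (F.ux t y) (F.J t y (F.ux t y)) (F.J t y (F.ux t y))⟫)
          (⟪F.Dx F.ut t x, F.R t x (F.ux t x) (F.J t x (F.ux t x)) (F.J t x (F.ux t x))⟫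
            + ⟪F.ut t x, F.Dx (fun t x => F.R t x (F.ux t x) (F.J t x (F.ux t x)) (F.J t x (F.ux t x))) t x⟫) x :=
        F.metric_x _ hmUT _ hmS t x
      have m4 : HasDerivAt (fun y => ⟪F.J t y (F.Dx F.ux t y), F.Dx (F.Dx F.ux) t y⟫)
          (⟪F.Dx (fun t x => F.J t x (F.Dx F.ux t x)) t x, F.Dx (F.Dx F.ux) t x⟫
            + ⟪F.J t x (F.Dx F.ux t x), F.Dx (F.Dx (F.Dx F.ux)) t x⟫) x :=
        F.metric_x _ hmJW _ hmDW t x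
      have m5 : HasDerivAt (fun y => ⟪F.Dx (F.Dx F.ux) t y, F.Dx (F.Dx F.ux) t y⟫)
          (⟪F.Dx (F.Dx (F.Dx F.ux)) t x, F.Dx (F.Dx F.ux) t x⟫
            + ⟪F.Dx (F.Dx F.ux) t x, F.Dx (F.Dx (F.Dx F.ux)) t x⟫) x :=
        F.metric_x _ hmDW _ hmDW t x
      have m6 : HasDerivAt (fun y => ⟪F.Dx F.ux t y, F.R t y (F.ux t y) (F.Dx F.ux t y) (F.ux t y)⟫)
          (⟪F.Dx (F.Dx F.ux) t x, F.R t x (F.ux t x) (F.Dx F.ux t x) (F.ux t x)⟫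
            + ⟪F.Dx F.ux t x, F.Dx (fun t x => F.R t x (F.ux t x) (F.Dx F.ux t x) (F.ux t x)) t x⟫) x :=
        F.metric_x _ hmW _ hmRXWX t x
      have m7 : HasDerivAt (fun y => ⟪F.R t y (F.ux t y) (F.J t y (F.ux t y)) (F.J t y (F.ux t y)), F.Dx (F.Dx F.ux) t y⟫)
          (⟪F.Dx (fun t x => F.R t x (F.ux t x) (F.J t x (F.ux t x)) (F.J t x (F.ux t x))) t x, F.Dx (F.Dx F.ux) t x⟫
            + ⟪F.R t x (F.ux t x) (F.J t x (F.ux t x)) (F.J t x (F.ux t x)), F.Dx (F.Dx (F.Dx F.ux)) t x⟫) x :=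
        F.metric_x _ hmS _ hmDW t x
      have m8 : HasDerivAt (fun y => ⟪F.R t y (F.ux t y) (F.J t y (F.ux t y)) (F.J t y (F.ux t y)),
            F.R t y (F.ux t y) (F.J t y (F.ux t y)) (F.J t y (F.ux t y))⟫)
          (⟪F.Dx (fun t x => F.R t x (F.ux t x) (F.J t x (F.ux t x)) (F.J t x (F.ux t x))) t x,
              F.R t x (F.ux t x) (F.J t x (F.ux t x)) (F.J t x (F.ux t x))⟫
            + ⟪F.R t x (F.ux t x) (F.J t x (F.ux t x)) (F.J t x (F.ux t x)),
              F.Dx (fun t x => F.R t x (F.ux t x) (F.J t x (F.ux t x)) (F.J t x (F.ux t x))) t x⟫) x :=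
        F.metric_x _ hmS _ hmS t x
      have h := ((((m1.const_mul 2).sub (m2.const_mul 2)).sub m3).add (m4.const_mul (2*α))).add
        ((((m5.sub m6).add m7).add (m8.const_mul (1/4))).const_mul β)
      rw [hGb]
      convert h using 1
      case e'_4 => rfl
      case e'_5 => rfl
      case e'_8 => rfl
      rw [hDtDxu t x, hDtS t x, hTor t x, hDxS t x, hDxRXWX t x, F.J_par_x _ hmW t x]
      have a1 : ⟪F.R t x (F.ut t x) (F.ux t x) (F.ux t x), F.Dx F.ux t x⟫
          = -⟪F.R t x (F.ux t x) (F.Dx F.ux t x) (F.ux t x), F.ut t x⟫ := hAlg1 t x _ _ _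
      have a2 : ⟪F.Dx F.ux t x, F.R t x (F.ut t x) (F.ux t x) (F.ux t x)⟫
          = -⟪F.R t x (F.ux t x) (F.Dx F.ux t x) (F.ux t x), F.ut t x⟫ :=
        (real_inner_comm _ _).trans a1
      have hUTr : ∀ z : V, ⟪z, F.ut t x⟫
          = α*⟪z, F.J t x (F.Dx F.ux t x)⟫ + β*(⟪z, F.Dx (F.Dx F.ux) t x⟫
            + (1/2)*⟪z, F.R t x (F.ux t x) (F.J t x (F.ux t x)) (F.J t x (F.ux t x))⟫) := by
        intro z
        rw [hflow t x, inner_add_right, real_inner_smul_right, real_inner_smul_right,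
          inner_add_right, real_inner_smul_right]
      have hUTl : ∀ z : V, ⟪F.ut t x, z⟫
          = α*⟪F.J t x (F.Dx F.ux t x), z⟫ + β*(⟪F.Dx (F.Dx F.ux) t x, z⟫
            + (1/2)*⟪F.R t x (F.ux t x) (F.J t x (F.ux t x)) (F.J t x (F.ux t x)), z⟫) := by
        intro z
        rw [hflow t x, inner_add_left, real_inner_smul_left, real_inner_smul_left,
          inner_add_left, real_inner_smul_left]
      have b1 := hB1 t x (F.Dx F.ut t x) (F.ux t x)
      have b2 := hB2 t x (F.Dx F.ut t x) (F.ux t x)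
      have b3 := hB3 t x (F.Dx F.ut t x) (F.ux t x)
      have b4 := real_inner_comm (F.R t x (F.ux t x) (F.J t x (F.ux t x)) (F.J t x (F.ux t x))) (F.Dx F.ut t x)
      have c1 := hA4 t x (F.ux t x) (F.Dx F.ux t x)
      have c2 := hA3 t x (F.ux t x) (F.Dx F.ux t x)
      have c3 : ⟪F.J t x (F.Dx F.ux t x), F.R t x (F.ux t x) (F.J t x (F.ux t x)) (F.J t x (F.Dx F.ux t x))⟫ = 0 := by
        rw [real_inner_comm]; exact hsk0 t x _ _ _
      have jd0 : ⟪F.J t x (F.Dx (F.Dx F.ux) t x), F.Dx (F.Dx F.ux) t x⟫ = 0 := hJ0 t x _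
      have n1 : ⟪F.Dx F.ux t x, F.R t x (F.Dx F.ux t x) (F.Dx F.ux t x) (F.ux t x)⟫ = 0 := by
        rw [haa t x]; exact inner_zero_right _
      have n2 := hB0 t x (F.ux t x) (F.Dx (F.Dx F.ux) t x) (F.Dx F.ux t x)
      have n3 : ⟪F.Dx F.ux t x, F.R t x (F.ux t x) (F.Dx F.ux t x) (F.Dx F.ux t x)⟫ = 0 := by
        rw [real_inner_comm]; exact hsk0 t x _ _ _
      have d6 := real_inner_comm (F.R t x (F.ux t x) (F.Dx F.ux t x) (F.ux t x)) (F.Dx (F.Dx F.ux) t x)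
      have a0 := real_inner_comm (F.Dx (F.Dx F.ut) t x) (F.Dx F.ux t x)
      have g5 := real_inner_comm (F.Dx (F.Dx F.ux) t x) (F.Dx (F.Dx (F.Dx F.ux)) t x)
      have p1 := real_inner_comm (F.Dx (F.Dx F.ux) t x)
        (F.R t x (F.Dx F.ux t x) (F.J t x (F.ux t x)) (F.J t x (F.ux t x)))
      have p2 := real_inner_comm (F.Dx (F.Dx F.ux) t x)
        (F.R t x (F.ux t x) (F.J t x (F.Dx F.ux t x)) (F.J t x (F.ux t x)))
      have p3 := real_inner_comm (F.Dx (F.Dx F.ux) t x)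
        (F.R t x (F.ux t x) (F.J t x (F.ux t x)) (F.J t x (F.Dx F.ux t x)))
      have s1 := real_inner_comm (F.R t x (F.ux t x) (F.J t x (F.ux t x)) (F.J t x (F.ux t x)))
        (F.R t x (F.Dx F.ux t x) (F.J t x (F.ux t x)) (F.J t x (F.ux t x)))
      have s2 := real_inner_comm (F.R t x (F.ux t x) (F.J t x (F.ux t x)) (F.J t x (F.ux t x)))
        (F.R t x (F.ux t x) (F.J t x (F.Dx F.ux t x)) (F.J t x (F.ux t x)))
      have s3 := real_inner_comm (F.R t x (F.ux t x) (F.J t x (F.ux t x)) (F.J t x (F.ux t x)))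
        (F.R t x (F.ux t x) (F.J t x (F.ux t x)) (F.J t x (F.Dx F.ux t x)))
      have hc := hC t x
      simp only [inner_add_left, inner_add_right, a1, a2, a0, b1, b2, b3, b4, hUTr, hUTl,
        c1, c2, c3, jd0, n1, n2, n3, d6, g5, p1, p2, p3, s1, s2, s3, hc]
      ring
    have hcA : Continuous fun x : ℝ =>
        ⟪F.Dt (F.Dx F.ux) t x, F.Dx F.ux t x⟫ + ⟪F.Dx F.ux t x, F.Dt (F.Dx F.ux) t x⟫ := by
      exact ((hcx _ hmDtW t).inner (hcx _ hmW t)).add ((hcx _ hmW t).inner (hcx _ hmDtW t))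
    have hcB : Continuous fun x : ℝ =>
        ⟪F.Dt F.ux t x, F.R t x (F.ux t x) (F.J t x (F.ux t x)) (F.J t x (F.ux t x))⟫
          + ⟪F.ux t x, F.Dt (fun t x => F.R t x (F.ux t x) (F.J t x (F.ux t x)) (F.J t x (F.ux t x))) t x⟫ := by
      exact ((hcx _ hmDtX t).inner (hcx _ hmS t)).add ((hcx _ hmX t).inner (hcx _ hmDtS t))
    have hP : Continuous fun x : ℝ =>
        (⟪F.Dt (F.Dx F.ux) t x, F.Dx F.ux t x⟫ + ⟪F.Dx F.ux t x, F.Dt (F.Dx F.ux) t x⟫)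
          - (1/4:ℝ)*(⟪F.Dt F.ux t x, F.R t x (F.ux t x) (F.J t x (F.ux t x)) (F.J t x (F.ux t x))⟫
            + ⟪F.ux t x, F.Dt (fun t x => F.R t x (F.ux t x) (F.J t x (F.ux t x)) (F.J t x (F.ux t x))) t x⟫) :=
      hcA.sub (continuous_const.mul hcB)
    have hFTC := intervalIntegral.integral_eq_sub_of_hasDerivAt
      (f := Gb) (a := 0) (b := 2*π) (fun x _ => hG x) (hP.intervalIntegrable 0 (2*π))
    have pX : F.ux t (2*π) = F.ux t 0 := hper _ hmX t
    have pS : F.R t (2*π) (F.ux t (2*π)) (F.J t (2*π) (F.ux t (2*π))) (F.J t (2*π) (F.ux t (2*π)))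
        = F.R t 0 (F.ux t 0) (F.J t 0 (F.ux t 0)) (F.J t 0 (F.ux t 0)) := hper _ hmS t
    have pRX : F.R t (2*π) (F.ux t (2*π)) (F.Dx F.ux t (2*π)) (F.ux t (2*π))
        = F.R t 0 (F.ux t 0) (F.Dx F.ux t 0) (F.ux t 0) := hper _ hmRXWX t
    have pJW : F.J t (2*π) (F.Dx F.ux t (2*π)) = F.J t 0 (F.Dx F.ux t 0) := hper _ hmJW t
    have pW : F.Dx F.ux t (2*π) = F.Dx F.ux t 0 := hper _ hmW t
    have pDW : F.Dx (F.Dx F.ux) t (2*π) = F.Dx (F.Dx F.ux) t 0 := hper _ hmDW t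
    have pUT : F.ut t (2*π) = F.ut t 0 := hper _ hmUT t
    have pDUT : F.Dx F.ut t (2*π) = F.Dx F.ut t 0 := hper _ hmDUT t
    have hGper : Gb (2*π) = Gb 0 := by
      rw [hGb]
      show (((2*⟪F.Dx F.ut t (2*π), F.Dx F.ux t (2*π)⟫ - 2*⟪F.ut t (2*π), F.Dx (F.Dx F.ux) t (2*π)⟫)
        - ⟪F.ut t (2*π), F.R t (2*π) (F.ux t (2*π)) (F.J t (2*π) (F.ux t (2*π))) (F.J t (2*π) (F.ux t (2*π)))⟫)
        + (2*α)*⟪F.J t (2*π) (F.Dx F.ux t (2*π)), F.Dx (F.Dx F.ux) t (2*π)⟫)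
        + β*((((⟪F.Dx (F.Dx F.ux) t (2*π), F.Dx (F.Dx F.ux) t (2*π)⟫
          - ⟪F.Dx F.ux t (2*π), F.R t (2*π) (F.ux t (2*π)) (F.Dx F.ux t (2*π)) (F.ux t (2*π))⟫)
          + ⟪F.R t (2*π) (F.ux t (2*π)) (F.J t (2*π) (F.ux t (2*π))) (F.J t (2*π) (F.ux t (2*π))), F.Dx (F.Dx F.ux) t (2*π)⟫)
          + (1/4)*⟪F.R t (2*π) (F.ux t (2*π)) (F.J t (2*π) (F.ux t (2*π))) (F.J t (2*π) (F.ux t (2*π))),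
              F.R t (2*π) (F.ux t (2*π)) (F.J t (2*π) (F.ux t (2*π))) (F.J t (2*π) (F.ux t (2*π)))⟫))
        = (((2*⟪F.Dx F.ut t 0, F.Dx F.ux t 0⟫ - 2*⟪F.ut t 0, F.Dx (F.Dx F.ux) t 0⟫)
        - ⟪F.ut t 0, F.R t 0 (F.ux t 0) (F.J t 0 (F.ux t 0)) (F.J t 0 (F.ux t 0))⟫)
        + (2*α)*⟪F.J t 0 (F.Dx F.ux t 0), F.Dx (F.Dx F.ux) t 0⟫)
        + β*((((⟪F.Dx (F.Dx F.ux) t 0, F.Dx (F.Dx F.ux) t 0⟫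
          - ⟪F.Dx F.ux t 0, F.R t 0 (F.ux t 0) (F.Dx F.ux t 0) (F.ux t 0)⟫)
          + ⟪F.R t 0 (F.ux t 0) (F.J t 0 (F.ux t 0)) (F.J t 0 (F.ux t 0)), F.Dx (F.Dx F.ux) t 0⟫)
          + (1/4)*⟪F.R t 0 (F.ux t 0) (F.J t 0 (F.ux t 0)) (F.J t 0 (F.ux t 0)),
              F.R t 0 (F.ux t 0) (F.J t 0 (F.ux t 0)) (F.J t 0 (F.ux t 0))⟫))
      rw [pS, pRX, pJW, pDUT, pUT, pDW, pW]
    have hint0 : (∫ x in (0:ℝ)..(2*π),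
        ((⟪F.Dt (F.Dx F.ux) t x, F.Dx F.ux t x⟫ + ⟪F.Dx F.ux t x, F.Dt (F.Dx F.ux) t x⟫)
          - (1/4:ℝ)*(⟪F.Dt F.ux t x, F.R t x (F.ux t x) (F.J t x (F.ux t x)) (F.J t x (F.ux t x))⟫
            + ⟪F.ux t x, F.Dt (fun t x => F.R t x (F.ux t x) (F.J t x (F.ux t x)) (F.J t x (F.ux t x))) t x⟫))) = 0 := by
      rw [hFTC, hGper, sub_self]
    have intA := hcA.intervalIntegrable (μ := MeasureTheory.volume) (0:ℝ) (2*π)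
    have intB := hcB.intervalIntegrable (μ := MeasureTheory.volume) (0:ℝ) (2*π)
    have intB4 : IntervalIntegrable (fun x : ℝ => (1/4:ℝ)*(⟪F.Dt F.ux t x, F.R t x (F.ux t x) (F.J t x (F.ux t x)) (F.J t x (F.ux t x))⟫
            + ⟪F.ux t x, F.Dt (fun t x => F.R t x (F.ux t x) (F.J t x (F.ux t x)) (F.J t x (F.ux t x))) t x⟫))
        MeasureTheory.volume 0 (2*π) := intB.const_mul (1/4:ℝ)
    have hsub : (∫ x in (0:ℝ)..(2*π),
        ((⟪F.Dt (F.Dx F.ux) t x, F.Dx F.ux t x⟫ + ⟪F.Dx F.ux t x, F.Dt (F.Dx F.ux) t x⟫)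
          - (1/4:ℝ)*(⟪F.Dt F.ux t x, F.R t x (F.ux t x) (F.J t x (F.ux t x)) (F.J t x (F.ux t x))⟫
            + ⟪F.ux t x, F.Dt (fun t x => F.R t x (F.ux t x) (F.J t x (F.ux t x)) (F.J t x (F.ux t x))) t x⟫)))
        = (∫ x in (0:ℝ)..(2*π), (⟪F.Dt (F.Dx F.ux) t x, F.Dx F.ux t x⟫ + ⟪F.Dx F.ux t x, F.Dt (F.Dx F.ux) t x⟫))
          - ∫ x in (0:ℝ)..(2*π), ((1/4:ℝ)*(⟪F.Dt F.ux t x, F.R t x (F.ux t x) (F.J t x (F.ux t x)) (F.J t x (F.ux t x))⟫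
            + ⟪F.ux t x, F.Dt (fun t x => F.R t x (F.ux t x) (F.J t x (F.ux t x)) (F.J t x (F.ux t x))) t x⟫)) :=
      intervalIntegral.integral_sub intA intB4
    have hcm : (∫ x in (0:ℝ)..(2*π), ((1/4:ℝ)*(⟪F.Dt F.ux t x, F.R t x (F.ux t x) (F.J t x (F.ux t x)) (F.J t x (F.ux t x))⟫
            + ⟪F.ux t x, F.Dt (fun t x => F.R t x (F.ux t x) (F.J t x (F.ux t x)) (F.J t x (F.ux t x))) t x⟫)))
        = (1/4:ℝ) * ∫ x in (0:ℝ)..(2*π), (⟪F.Dt F.ux t x, F.R t x (F.ux t x) (F.J t x (F.ux t x)) (F.J t x (F.ux t x))⟫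
            + ⟪F.ux t x, F.Dt (fun t x => F.R t x (F.ux t x) (F.J t x (F.ux t x)) (F.J t x (F.ux t x))) t x⟫) :=
      intervalIntegral.integral_const_mul _ _
    rw [hsub, hcm] at hint0
    have h1 : HasDerivAt (fun τ : ℝ => ∫ x in (0:ℝ)..(2*π), ⟪F.Dx F.ux τ x, F.Dx F.ux τ x⟫)
        (∫ x in (0:ℝ)..(2*π), (⟪F.Dt (F.Dx F.ux) t x, F.Dx F.ux t x⟫ + ⟪F.Dx F.ux t x, F.Dt (F.Dx F.ux) t x⟫)) t :=
      F.dint _ hmW _ hmW t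
    have h2 : HasDerivAt (fun τ : ℝ => ∫ x in (0:ℝ)..(2*π),
          ⟪F.ux τ x, F.R τ x (F.ux τ x) (F.J τ x (F.ux τ x)) (F.J τ x (F.ux τ x))⟫)
        (∫ x in (0:ℝ)..(2*π), (⟪F.Dt F.ux t x, F.R t x (F.ux t x) (F.J t x (F.ux t x)) (F.J t x (F.ux t x))⟫
            + ⟪F.ux t x, F.Dt (fun t x => F.R t x (F.ux t x) (F.J t x (F.ux t x)) (F.J t x (F.ux t x))) t x⟫)) t :=
      F.dint _ hmX _ hmS t
    have hD : HasDerivAt (fun τ : ℝ => (∫ x in (0:ℝ)..(2*π), ⟪F.Dx F.ux τ x, F.Dx F.ux τ x⟫)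
        - (1/4 : ℝ) * ∫ x in (0:ℝ)..(2*π),
            ⟪F.ux τ x, F.R τ x (F.ux τ x) (F.J τ x (F.ux τ x)) (F.J τ x (F.ux τ x))⟫)
        ((∫ x in (0:ℝ)..(2*π), (⟪F.Dt (F.Dx F.ux) t x, F.Dx F.ux t x⟫ + ⟪F.Dx F.ux t x, F.Dt (F.Dx F.ux) t x⟫))
          - (1/4:ℝ) * ∫ x in (0:ℝ)..(2*π), (⟪F.Dt F.ux t x, F.R t x (F.ux t x) (F.J t x (F.ux t x)) (F.J t x (F.ux t x))⟫
            + ⟪F.ux t x, F.Dt (fun t x => F.R t x (F.ux t x) (F.J t x (F.ux t x)) (F.J t x (F.ux t x))) t x⟫)) t :=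
      h1.sub (h2.const_mul (1/4:ℝ))
    rw [hint0] at hD
    exact hD
  exact is_const_of_deriv_eq_zero (fun s => (hE s).differentiableAt) (fun s => (hE s).deriv) t₁ t₂
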